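/- Let n ≥ 2, 1 ≤ r < n, a < b positive integers, z ∈ Z_+, and y = (a^r, b^{n-r}). If c = (c_1,...,c_n) is a permutation-invariant parking sequence for (y;z), then c_i ≤ z + (r-1)a for all i ∈ [n]. -/

import Mathlib

open Finset

/-- The first empty spot `j` with `c ≤ j ≤ M` (street spots are `1..M`). -/
def firstEmpty (occ : Finset ℕ) (M c : ℕ) : Option ℕ :=
  (List.range' c (M + 1 - c)).find? (fun j => decide (j ∉ occ))

/-- Park cars with preferences `cs` and lengths `ys` on a street with spots `1..M`,
where `occ` is the set of already-occupied spots.  Returns the list of starting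
spots of the cars (in order of entry) if all cars can park. -/
def parkAux (M : ℕ) : Finset ℕ → List ℕ → List ℕ → Option (List ℕ)
  | _, [], [] => some []
  | occ, c :: cs, y :: ys =>
    match firstEmpty occ M c with
    | none => none
    | some j =>
      if (∀ i ∈ Finset.Ico j (j + y), i ∉ occ) ∧ j + y - 1 ≤ M then
        (parkAux M (occ ∪ Finset.Ico j (j + y)) cs ys).map (j :: ·)
      else none
  | _, _, _ => none

/-- Outcome of the parking process for length vector `ys`, preference sequence `cs`,
and trailer parameter `z` (the trailer occupies spots `1,…,z-1`); the street has
`z - 1 + ys.sum` spots. -/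
def parkResult (ys cs : List ℕ) (z : ℕ) : Option (List ℕ) :=
  parkAux (z - 1 + ys.sum) (Finset.Ico 1 z) cs ys

/-- `cs` is a parking sequence for `(ys; z)`. -/
def IsParkingSeq (ys cs : List ℕ) (z : ℕ) : Prop :=
  cs.length = ys.length ∧ (∀ c ∈ cs, 1 ≤ c) ∧ (parkResult ys cs z).isSome = true

/-- Starting spots of the standard (no-gap, in order) final configuration. -/
def standardStarts (z : ℕ) : List ℕ → List ℕ
  | [] => []
  | y :: ys => z :: standardStarts (z + y) ys

/-- `cs` parks `ys` in the standard order `T, C₁, …, Cₙ`. -/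
def ParksStandard (ys cs : List ℕ) (z : ℕ) : Prop :=
  parkResult ys cs z = some (standardStarts z ys)

/-- `cs` is a permutation-invariant parking sequence for `(ys; z)`. -/
def PermInvariant (ys cs : List ℕ) (z : ℕ) : Prop :=
  ∀ cs' : List ℕ, cs'.Perm cs → IsParkingSeq ys cs' z

/-- `cs` is a strong parking sequence for `{ys; z}`. -/
def StrongParkingSeq (ys cs : List ℕ) (z : ℕ) : Prop :=
  ∀ ys' : List ℕ, ys'.Perm ys → IsParkingSeq ys' cs z

/-- The nondecreasing rearrangement (order statistics) of a list. -/
def orderStats (l : List ℕ) : List ℕ :=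
  Multiset.sort (l : Multiset ℕ) (· ≤ ·)

/-- `xs` is a `u`-parking function. -/
def IsUPF (u xs : List ℕ) : Prop :=
  xs.length = u.length ∧ (∀ x ∈ xs, 1 ≤ x) ∧
    ∀ i < u.length, (orderStats xs).getD i 0 ≤ u.getD i 0

lemma find?_range'_some {p : ℕ → Bool} : ∀ (n s j : ℕ), (List.range' s n).find? p = some j →
    p j = true ∧ s ≤ j ∧ j < s + n ∧ ∀ i, s ≤ i → i < j → p i = false := by
  intro n
  induction n with
  | zero => simp
  | succ n ih =>
    intro s j h
    rw [List.range'_succ] at h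
    by_cases hp : p s
    · rw [List.find?_cons_of_pos hp] at h
      obtain rfl : s = j := by simpa using h
      exact ⟨hp, le_refl _, by omega, fun i h1 h2 => by omega⟩
    · rw [List.find?_cons_of_neg hp] at h
      obtain ⟨h1, h2, h3, h4⟩ := ih (s+1) j h
      refine ⟨h1, by omega, by omega, fun i hi1 hi2 => ?_⟩
      rcases eq_or_lt_of_le hi1 with rfl | hlt
      · simpa using hp
      · exact h4 i hlt hi2

lemma find?_range'_some_of {p : ℕ → Bool} : ∀ (n s j : ℕ), s ≤ j → j < s + n → p j = true →
    (∀ i, s ≤ i → i < j → p i = false) → (List.range' s n).find? p = some j := by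
  intro n
  induction n with
  | zero => omega
  | succ n ih =>
    intro s j h1 h2 h3 h4
    rw [List.range'_succ]
    rcases eq_or_lt_of_le h1 with rfl | hlt
    · rw [List.find?_cons_of_pos h3]
    · rw [List.find?_cons_of_neg (by simpa using h4 s le_rfl hlt)]
      exact ih (s+1) j hlt (by omega) h3 (fun i hi1 hi2 => h4 i (by omega) hi2)

lemma fe_some {occ : Finset ℕ} {M c j : ℕ} (h : firstEmpty occ M c = some j) :
    j ∉ occ ∧ c ≤ j ∧ j ≤ M ∧ ∀ i, c ≤ i → i < j → i ∈ occ := by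
  obtain ⟨h1, h2, h3, h4⟩ := find?_range'_some _ _ _ h
  refine ⟨by simpa using h1, h2, by omega, fun i hi1 hi2 => ?_⟩
  have := h4 i hi1 hi2
  simpa using this

lemma fe_of {occ : Finset ℕ} {M c j : ℕ} (h1 : j ∉ occ) (h2 : c ≤ j) (h3 : j ≤ M)
    (h4 : ∀ i, c ≤ i → i < j → i ∈ occ) : firstEmpty occ M c = some j := by
  refine find?_range'_some_of _ _ _ h2 (by omega) (by simpa using h1)
    (fun i hi1 hi2 => by simpa using h4 i hi1 hi2)

lemma fe_none {occ : Finset ℕ} {M c : ℕ} (h : M < c) : firstEmpty occ M c = none := by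
  unfold firstEmpty
  rw [Nat.sub_eq_zero_of_le (by omega)]
  rfl

lemma parkAux_cons_some {M : ℕ} {occ : Finset ℕ} {c y j : ℕ} {cs ys : List ℕ}
    (hfe : firstEmpty occ M c = some j)
    (hfit : (∀ i ∈ Finset.Ico j (j + y), i ∉ occ) ∧ j + y - 1 ≤ M) :
    parkAux M occ (c :: cs) (y :: ys)
      = (parkAux M (occ ∪ Finset.Ico j (j + y)) cs ys).map (j :: ·) := by
  rw [parkAux, hfe]; dsimp only; rw [if_pos hfit]

lemma parkAux_cons_nofit {M : ℕ} {occ : Finset ℕ} {c y j : ℕ} {cs ys : List ℕ}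
    (hfe : firstEmpty occ M c = some j)
    (hfit : ¬ ((∀ i ∈ Finset.Ico j (j + y), i ∉ occ) ∧ j + y - 1 ≤ M)) :
    parkAux M occ (c :: cs) (y :: ys) = none := by
  rw [parkAux, hfe]; dsimp only; rw [if_neg hfit]

lemma parkAux_cons_nofe {M : ℕ} {occ : Finset ℕ} {c y : ℕ} {cs ys : List ℕ}
    (hfe : firstEmpty occ M c = none) :
    parkAux M occ (c :: cs) (y :: ys) = none := by
  rw [parkAux, hfe]

lemma parkAux_nil_cons {M : ℕ} {occ : Finset ℕ} {y : ℕ} {ys : List ℕ} :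
    parkAux M occ [] (y :: ys) = none := by simp [parkAux]

lemma parkAux_cons_nil {M : ℕ} {occ : Finset ℕ} {c : ℕ} {cs : List ℕ} :
    parkAux M occ (c :: cs) [] = none := by simp [parkAux]

lemma parkAux_nil_nil {M : ℕ} {occ : Finset ℕ} :
    parkAux M occ [] [] = some [] := by rw [parkAux]

lemma extract {M : ℕ} : ∀ (ys cs : List ℕ) (occ : Finset ℕ) (S : ℕ),
    (∀ y ∈ ys, 1 ≤ y) → (∀ c ∈ cs, 1 ≤ c) →
    (occ ⊆ Finset.Icc 1 M) → (occ.card + ys.sum = M) →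
    1 ≤ S → S ≤ M → S ∉ occ → (Finset.Ico 1 S ⊆ occ) →
    (parkAux M occ cs ys).isSome →
    ∃ c ∈ cs, c ≤ S ∧ ∃ y ∈ ys, ∀ i ∈ Finset.Ico S (S + y), i ∉ occ := by
  intro ys
  induction ys with
  | nil =>
    intro cs occ S _ _ hsub hcard h1S hSM hSocc _ hsome
    cases cs with
    | nil =>
      exfalso
      have : occ = Finset.Icc 1 M := by
        apply Finset.eq_of_subset_of_card_le hsub
        rw [Nat.card_Icc]
        simp at hcard
        omega
      exact hSocc (this ▸ (Finset.mem_Icc.mpr ⟨h1S, hSM⟩))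
    | cons c cs => rw [parkAux_cons_nil] at hsome; simp at hsome
  | cons y ys ih =>
    intro cs occ S hy hc hsub hcard h1S hSM hSocc hIco hsome
    cases cs with
    | nil => rw [parkAux_nil_cons] at hsome; simp at hsome
    | cons c cs =>
      cases hfe : firstEmpty occ M c with
      | none => rw [parkAux_cons_nofe hfe] at hsome; simp at hsome
      | some j =>
        obtain ⟨hjocc, hcj, hjM, hmin⟩ := fe_some hfe
        by_cases hfit : (∀ i ∈ Finset.Ico j (j + y), i ∉ occ) ∧ j + y - 1 ≤ M
        · by_cases hcS : c ≤ S
          · -- j = S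
            have hjS : j = S := by
              have h1 : ¬ (S < j) := fun hSj => hSocc (hmin S hcS hSj)
              have h2 : ¬ (j < S) := fun hjS => hjocc (hIco (Finset.mem_Ico.mpr ⟨by have := hc c (by simp); omega, hjS⟩))
              omega
            subst hjS
            exact ⟨c, by simp, hcS, y, by simp, hfit.1⟩
          · -- c > S, recurse
            have hjS : S < j := by omega
            have hy1 : 1 ≤ y := hy y (by simp)
            rw [parkAux_cons_some hfe hfit, Option.isSome_map] at hsome
            have hdisj : Disjoint occ (Finset.Ico j (j + y)) := by
              rw [Finset.disjoint_right]
              intro i hiI hiO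
              exact hfit.1 i hiI hiO
            obtain ⟨c', hc', hc'S, y', hy', hdisj'⟩ :=
              ih cs (occ ∪ Finset.Ico j (j + y)) S (fun x hx => hy x (by simp [hx]))
                (fun x hx => hc x (by simp [hx]))
                (by
                  intro x hx
                  rcases Finset.mem_union.mp hx with h | h
                  · exact hsub h
                  · rw [Finset.mem_Ico] at h
                    rw [Finset.mem_Icc]
                    omega)
                (by
                  rw [Finset.card_union_of_disjoint hdisj, Nat.card_Ico]
                  simp at hcard ⊢
                  omega)
                h1S hSM
                (by
                  rw [Finset.mem_union]
                  rintro (h | h)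
                  · exact hSocc h
                  · rw [Finset.mem_Ico] at h; omega)
                (fun x hx => Finset.mem_union_left _ (hIco hx))
                hsome
            exact ⟨c', by simp [hc'], hc'S, y', by simp [hy'], fun i hi hiO =>
              hdisj' i hi (Finset.mem_union_left _ hiO)⟩
        · rw [parkAux_cons_nofit hfe hfit] at hsome; simp at hsome

lemma sim_extend {M : ℕ} {occ0 : Finset ℕ} {pre lens : List ℕ} {occ : Finset ℕ}
    (hsim : ∀ cs' ys' : List ℕ, (parkAux M occ0 (pre ++ cs') (lens ++ ys')).isSome →
      (parkAux M occ cs' ys').isSome)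
    {d y j : ℕ} (hfe : firstEmpty occ M d = some j)
    (hfit : (∀ i ∈ Finset.Ico j (j + y), i ∉ occ) ∧ j + y - 1 ≤ M) :
    ∀ cs' ys' : List ℕ,
      (parkAux M occ0 ((pre ++ [d]) ++ cs') ((lens ++ [y]) ++ ys')).isSome →
      (parkAux M (occ ∪ Finset.Ico j (j + y)) cs' ys').isSome := by
  intro cs' ys' h
  rw [List.append_assoc, List.singleton_append, List.append_assoc, List.singleton_append] at h
  have h2 := hsim (d :: cs') (y :: ys') h
  rwa [parkAux_cons_some hfe hfit, Option.isSome_map] at h2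

lemma c0_step {M S c0 y : ℕ} {rest ys2 : List ℕ}
    (hSc0 : S < c0)
    (h1 : (parkAux M (Finset.Ico 1 S) (c0 :: rest) (y :: ys2)).isSome) :
    c0 + y - 1 ≤ M ∧
      (parkAux M (Finset.Ico 1 S ∪ Finset.Ico c0 (c0 + y)) rest ys2).isSome := by
  by_cases hc0M : c0 ≤ M
  · have hfe : firstEmpty (Finset.Ico 1 S) M c0 = some c0 :=
      fe_of (by simp [Finset.mem_Ico]; omega) le_rfl hc0M (fun i h1 h2 => by omega)
    by_cases hfit : (∀ i ∈ Finset.Ico c0 (c0 + y), i ∉ Finset.Ico 1 S) ∧ c0 + y - 1 ≤ M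
    · rw [parkAux_cons_some hfe hfit, Option.isSome_map] at h1
      exact ⟨hfit.2, h1⟩
    · rw [parkAux_cons_nofit hfe hfit] at h1; simp at h1
  · rw [parkAux_cons_nofe (fe_none (by omega))] at h1; simp at h1

lemma park_at_S {M S f y : ℕ} {occ : Finset ℕ} (h1f : 1 ≤ f) (hfS : f ≤ S) (hSM : S ≤ M)
    (hSocc : S ∉ occ) (hIco : Finset.Ico 1 S ⊆ occ)
    (hfree : ∀ i ∈ Finset.Ico S (S + y), i ∉ occ) (hyM : S + y - 1 ≤ M) :
    firstEmpty occ M f = some S ∧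
      ((∀ i ∈ Finset.Ico S (S + y), i ∉ occ) ∧ S + y - 1 ≤ M) :=
  ⟨fe_of hSocc hfS hSM (fun i hi1 hi2 => hIco (Finset.mem_Ico.mpr ⟨by omega, hi2⟩)),
    hfree, hyM⟩


theorem stmt12 (n r a b z : ℕ) (hn : 2 ≤ n) (hr1 : 1 ≤ r) (hrn : r < n)
    (ha : 0 < a) (hab : a < b) (hz : 0 < z) (cs : List ℕ)
    (hperm : PermInvariant (List.replicate r a ++ List.replicate (n - r) b) cs z) :
    ∀ c ∈ cs, c ≤ z + (r - 1) * a := by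
  intro c0 hc0
  by_contra hgt
  push_neg at hgt
  set YS := List.replicate r a ++ List.replicate (n - r) b with hYSdef
  set M := z - 1 + YS.sum with hMdef
  have hsumYS : YS.sum = r * a + (n - r) * b := by
    rw [hYSdef]; simp [List.sum_replicate, smul_eq_mul]
  have hra : (r - 1) * a + a = r * a := by
    have h1 : r - 1 + 1 = r := by omega
    calc (r - 1) * a + a = ((r - 1) + 1) * a := by ring
    _ = r * a := by rw [h1]
  have hM1 : M + 1 = z + r * a + (n - r) * b := by omega
  have h1cs : ∀ x ∈ cs, 1 ≤ x := (hperm cs (List.Perm.refl _)).2.1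
  have hrun : ∀ cs' : List ℕ, cs'.Perm cs →
      (parkAux M (Finset.Ico 1 z) cs' YS).isSome = true := by
    intro cs' h
    have h2 := (hperm cs' h).2.2
    unfold parkResult at h2
    rw [hMdef]
    exact h2
  -- Phase 1 : build a prefix of r-1 cars parking consecutively from spot z
  have phase1 : ∀ k : ℕ, k ≤ r - 1 → ∃ ds rest : List ℕ,
      (ds ++ c0 :: rest).Perm cs ∧ ds.length = k ∧
      ∀ cs' ys' : List ℕ,
        (parkAux M (Finset.Ico 1 z) (ds ++ cs') (List.replicate k a ++ ys')).isSome →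
        (parkAux M (Finset.Ico 1 (z + k * a)) cs' ys').isSome := by
    intro k
    induction k with
    | zero =>
      intro _
      refine ⟨[], cs.erase c0, by simpa using (List.perm_cons_erase hc0).symm, rfl, ?_⟩
      intro cs' ys' h
      simpa using h
    | succ k ih =>
      intro hk1
      obtain ⟨ds, rest, hp, hlen, hsim⟩ := ih (by omega)
      have hkr : k * a ≤ (r - 1) * a := Nat.mul_le_mul_right a (by omega)
      have hk1r : (k + 1) * a ≤ r * a := Nat.mul_le_mul_right a (by omega)
      have hsucm : (k + 1) * a = k * a + a := Nat.succ_mul k a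
      have hSc0 : z + k * a < c0 := by omega
      have hsplit : YS = List.replicate k a ++
          (a :: (List.replicate (r - 1 - k) a ++ List.replicate (n - r) b)) := by
        rw [hYSdef, show r = k + (r - 1 - k + 1) by omega, List.replicate_add,
          List.replicate_succ]
        simp
      have hr1x := hrun (ds ++ c0 :: rest) hp
      rw [hsplit] at hr1x
      have h1 := hsim (c0 :: rest) _ hr1x
      obtain ⟨hfitM, h2⟩ := c0_step hSc0 h1
      have hc0M : c0 ≤ M := by omega
      have hmemrest : ∀ x ∈ rest, x ∈ cs := fun x hx => hp.subset (by simp [hx])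
      have hsum2 : (List.replicate (r - 1 - k) a ++ List.replicate (n - r) b).sum
          = (r - 1 - k) * a + (n - r) * b := by simp [List.sum_replicate, smul_eq_mul]
      have hmul2 : k * a + (a + (r - 1 - k) * a) = r * a := by
        have h3 : k + (1 + (r - 1 - k)) = r := by omega
        calc k * a + (a + (r - 1 - k) * a) = (k + (1 + (r - 1 - k))) * a := by ring
        _ = r * a := by rw [h3]
      obtain ⟨f, hf, hfS, -⟩ := extract _ rest
        (Finset.Ico 1 (z + k * a) ∪ Finset.Ico c0 (c0 + a)) (z + k * a)
        (by
          intro y hy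
          rcases List.mem_append.mp hy with h | h <;>
            rw [List.eq_of_mem_replicate h] <;> omega)
        (fun x hx => h1cs x (hmemrest x hx))
        (by
          intro x hx
          rcases Finset.mem_union.mp hx with h | h <;>
            simp only [Finset.mem_Ico] at h <;> rw [Finset.mem_Icc] <;> omega)
        (by
          rw [Finset.card_union_of_disjoint (by
            rw [Finset.disjoint_left]
            intro x hx hx2
            simp only [Finset.mem_Ico] at hx hx2
            omega), Nat.card_Ico, Nat.card_Ico, hsum2]
          omega)
        (by omega) (by omega)
        (by
          rw [Finset.mem_union]
          rintro (h | h) <;> simp only [Finset.mem_Ico] at h <;> omega)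
        (fun x hx => Finset.mem_union_left _ hx)
        h2
      have h1f : 1 ≤ f := h1cs f (hmemrest f hf)
      obtain ⟨hfe2, hfit2⟩ := park_at_S (M := M) (occ := Finset.Ico 1 (z + k * a)) (y := a)
        h1f hfS (by omega) (by simp) Finset.Subset.rfl
        (by intro i hi; simp only [Finset.mem_Ico] at hi ⊢; omega) (by omega)
      refine ⟨ds ++ [f], rest.erase f, ?_, by simp [hlen], ?_⟩
      · have hrp : rest.Perm (f :: rest.erase f) := List.perm_cons_erase hf
        have e1 : (ds ++ [f]) ++ c0 :: rest.erase f = ds ++ (f :: c0 :: rest.erase f) := by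
          simp
        rw [e1]
        exact ((List.Perm.append_left ds
          ((List.Perm.swap c0 f _).trans ((hrp.symm).cons c0))).trans hp)
      · intro cs' ys' hh
        rw [List.replicate_succ'] at hh
        have hnew := sim_extend hsim hfe2 hfit2 cs' ys' hh
        have euni : Finset.Ico 1 (z + k * a) ∪ Finset.Ico (z + k * a) (z + k * a + a)
            = Finset.Ico 1 (z + (k + 1) * a) := by
          rw [Finset.Ico_union_Ico_eq_Ico (by omega) (by omega)]
          congr 1
          omega
        rwa [euni] at hnew
  obtain ⟨ds, rest0, hpT, hlends, hsimT⟩ := phase1 (r - 1) le_rfl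
  -- T phase
  have tphase : ∀ j : ℕ, j ≤ n - r → ∃ fs rest : List ℕ,
      (ds ++ c0 :: (fs ++ rest)).Perm cs ∧ fs.length = j ∧
      z + (r - 1) * a + j * b < c0 ∧ c0 + a - 1 ≤ M ∧
      (1 ≤ j → ∃ x ∈ fs, x ≤ z + (r - 1) * a) ∧
      (∀ cs' ys' : List ℕ,
        (parkAux M (Finset.Ico 1 z) ((ds ++ c0 :: fs) ++ cs')
          ((List.replicate r a ++ List.replicate j b) ++ ys')).isSome →
        (parkAux M (Finset.Ico 1 (z + (r - 1) * a + j * b) ∪ Finset.Ico c0 (c0 + a))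
          cs' ys').isSome) := by
    intro j
    induction j with
    | zero =>
      intro _
      have hsplit0 : YS = List.replicate (r - 1) a ++ (a :: List.replicate (n - r) b) := by
        rw [hYSdef, show r = (r - 1) + 1 by omega, List.replicate_succ']
        simp
      have hr1x := hrun (ds ++ c0 :: rest0) hpT
      rw [hsplit0] at hr1x
      have h1 := hsimT (c0 :: rest0) _ hr1x
      obtain ⟨hfitM, h2⟩ := c0_step hgt h1
      have hc0M : c0 ≤ M := by omega
      have hfeC : firstEmpty (Finset.Ico 1 (z + (r - 1) * a)) M c0 = some c0 :=
        fe_of (by simp only [Finset.mem_Ico]; omega) le_rfl hc0M (fun i h1 h2 => by omega)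
      have hfitC : (∀ i ∈ Finset.Ico c0 (c0 + a), i ∉ Finset.Ico 1 (z + (r - 1) * a))
          ∧ c0 + a - 1 ≤ M := by
        refine ⟨?_, hfitM⟩
        intro i hi
        simp only [Finset.mem_Ico] at hi ⊢
        omega
      refine ⟨[], rest0, by simpa using hpT, rfl, by simpa using hgt, hfitM,
        fun h => absurd h (by omega), ?_⟩
      intro cs' ys' hh
      simp only [Nat.zero_mul, Nat.add_zero, List.replicate_zero, List.append_nil] at hh ⊢
      have hh' : (parkAux M (Finset.Ico 1 z) ((ds ++ [c0]) ++ cs')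
          ((List.replicate (r - 1) a ++ [a]) ++ ys')).isSome := by
        have e1 : (ds ++ [c0]) ++ cs' = (ds ++ c0 :: []) ++ cs' := by simp
        have e2 : (List.replicate (r - 1) a ++ [a]) ++ ys'
            = List.replicate r a ++ ys' := by
          rw [← List.replicate_succ', Nat.sub_add_cancel hr1]
        rw [e1, e2]
        exact hh
      have hnew := sim_extend hsimT hfeC hfitC cs' ys' hh'
      exact hnew
    | succ j ihj =>
      intro hjn
      obtain ⟨fs, rest, hpj, hlenj, hinvj, hfitM, hclause, hsimj⟩ := ihj (by omega)
      have hc0M : c0 ≤ M := by omega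
      have hjb : j * b + (n - r - j) * b = (n - r) * b := by
        have h3 : j + (n - r - j) = n - r :=
          Nat.add_sub_cancel' (le_trans (Nat.le_succ j) hjn)
        calc j * b + (n - r - j) * b = (j + (n - r - j)) * b := by ring
        _ = (n - r) * b := by rw [h3]
      have hsplitT : YS = (List.replicate r a ++ List.replicate j b)
          ++ List.replicate (n - r - j) b := by
        rw [hYSdef, (Nat.add_sub_cancel' (le_trans (Nat.le_succ j) hjn)).symm.trans rfl,
          List.replicate_add]
        simp
      have hr1x := hrun (ds ++ c0 :: (fs ++ rest)) hpj
      rw [hsplitT, show ds ++ c0 :: (fs ++ rest) = (ds ++ c0 :: fs) ++ rest by simp]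
        at hr1x
      have h2 := hsimj rest _ hr1x
      have hmemrest : ∀ x ∈ rest, x ∈ cs := fun x hx => hpj.subset (by simp [hx])
      have hsum2 : (List.replicate (n - r - j) b).sum = (n - r - j) * b := by
        simp [List.sum_replicate, smul_eq_mul]
      obtain ⟨f, hf, hfS, y', hy', hdisj⟩ := extract _ rest
        (Finset.Ico 1 (z + (r - 1) * a + j * b) ∪ Finset.Ico c0 (c0 + a))
        (z + (r - 1) * a + j * b)
        (by intro y hy; rw [List.eq_of_mem_replicate hy]; omega)
        (fun x hx => h1cs x (hmemrest x hx))
        (by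
          intro x hx
          rcases Finset.mem_union.mp hx with h | h <;>
            simp only [Finset.mem_Ico] at h <;> rw [Finset.mem_Icc] <;> omega)
        (by
          rw [Finset.card_union_of_disjoint (by
            rw [Finset.disjoint_left]
            intro x hx hx2
            simp only [Finset.mem_Ico] at hx hx2
            omega), Nat.card_Ico, Nat.card_Ico, hsum2]
          omega)
        (by omega) (by omega)
        (by
          rw [Finset.mem_union]
          rintro (h | h) <;> simp only [Finset.mem_Ico] at h <;> omega)
        (fun x hx => Finset.mem_union_left _ hx)
        h2
      rw [List.eq_of_mem_replicate hy'] at hdisj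
      have h1f : 1 ≤ f := h1cs f (hmemrest f hf)
      have hc0b : z + (r - 1) * a + j * b + b ≤ c0 := by
        by_contra hlt
        push_neg at hlt
        exact (hdisj c0 (Finset.mem_Ico.mpr ⟨by omega, by omega⟩))
          (Finset.mem_union_right _ (Finset.mem_Ico.mpr ⟨le_rfl, by omega⟩))
      have hsucb : (j + 1) * b = j * b + b := Nat.succ_mul j b
      rcases lt_or_eq_of_le hc0b with hc0lt | hc0eq
      · -- extend the T phase
        obtain ⟨hfe2, hfit2⟩ := park_at_S (M := M)
          (occ := Finset.Ico 1 (z + (r - 1) * a + j * b) ∪ Finset.Ico c0 (c0 + a)) (y := b)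
          h1f hfS (by omega)
          (by
            rw [Finset.mem_union]
            rintro (h | h) <;> simp only [Finset.mem_Ico] at h <;> omega)
          (fun x hx => Finset.mem_union_left _ hx)
          hdisj (by omega)
        refine ⟨fs ++ [f], rest.erase f, ?_, by simp [hlenj], by omega, hfitM, ?_, ?_⟩
        · have hrp : rest.Perm (f :: rest.erase f) := List.perm_cons_erase hf
          have e1 : ds ++ c0 :: ((fs ++ [f]) ++ rest.erase f)
              = ds ++ c0 :: (fs ++ (f :: rest.erase f)) := by simp
          rw [e1]
          refine List.Perm.trans ?_ hpj
          exact List.Perm.append_left ds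
            ((List.Perm.append_left fs hrp.symm).cons c0)
        · intro h1j
          rcases Nat.eq_zero_or_pos j with rfl | hj1
          · exact ⟨f, by simp, by simpa using hfS⟩
          · obtain ⟨x, hx, hxT⟩ := hclause hj1
            exact ⟨x, by simp [hx], hxT⟩
        · intro cs' ys' hh
          have hh' : (parkAux M (Finset.Ico 1 z) (((ds ++ c0 :: fs) ++ [f]) ++ cs')
              (((List.replicate r a ++ List.replicate j b) ++ [b]) ++ ys')).isSome := by
            have e1 : ((ds ++ c0 :: fs) ++ [f]) ++ cs'
                = (ds ++ c0 :: (fs ++ [f])) ++ cs' := by simp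
            have e2 : ((List.replicate r a ++ List.replicate j b) ++ [b]) ++ ys'
                = (List.replicate r a ++ List.replicate (j + 1) b) ++ ys' := by
              rw [List.replicate_succ']
              simp
            rw [e1, e2]
            exact hh
          have hnew := sim_extend hsimj hfe2 hfit2 cs' ys' hh'
          have euni : Finset.Ico 1 (z + (r - 1) * a + j * b)
                ∪ Finset.Ico (z + (r - 1) * a + j * b) (z + (r - 1) * a + j * b + b)
              = Finset.Ico 1 (z + (r - 1) * a + (j + 1) * b) := by
            rw [Finset.Ico_union_Ico_eq_Ico (by omega) (by omega)]
            congr 1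
            omega
          rwa [Finset.union_right_comm, euni] at hnew
      · -- switch to U phase and derive a contradiction
        exfalso
        obtain ⟨f1, hf1mem, hf1T⟩ : ∃ f1 ∈ fs ++ rest, f1 ≤ z + (r - 1) * a := by
          rcases Nat.eq_zero_or_pos j with rfl | hj1
          · exact ⟨f, List.mem_append_right _ hf, by simpa using hfS⟩
          · obtain ⟨x, hx, hxT⟩ := hclause hj1
            exact ⟨x, List.mem_append_left _ hx, hxT⟩
        have h1f1 : 1 ≤ f1 := h1cs f1 (hpj.subset (by simp [List.mem_append.mp hf1mem]))
        have hpL : (fs ++ rest).Perm (f1 :: (fs ++ rest).erase f1) :=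
          List.perm_cons_erase hf1mem
        have hpU0 : (ds ++ f1 :: (([] : List ℕ) ++ (c0 :: (fs ++ rest).erase f1))).Perm cs := by
          refine List.Perm.trans ?_ hpj
          simp only [List.nil_append]
          exact List.Perm.append_left ds
            ((List.Perm.swap c0 f1 _).trans ((hpL.symm).cons c0))
        -- generic U-phase step
        have ustep : ∀ i : ℕ, i + 1 ≤ j + 1 → ∀ gs rest2 : List ℕ,
            (ds ++ f1 :: (gs ++ (c0 :: rest2))).Perm cs → gs.length = i →
            (∀ cs' ys' : List ℕ,
              (parkAux M (Finset.Ico 1 z) ((ds ++ f1 :: gs) ++ cs')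
                ((List.replicate r a ++ List.replicate i b) ++ ys')).isSome →
              (parkAux M (Finset.Ico 1 (z + r * a + i * b)) cs' ys').isSome) →
            z + r * a + i * b + b ≤ c0 ∧ ∃ g ∈ rest2, g ≤ z + r * a + i * b := by
          intro i hi gs rest2 hpi hleni hsimi
          have hib : i * b ≤ j * b := Nat.mul_le_mul_right b (by omega)
          have hi1 : i + 1 ≤ n - r := le_trans hi hjn
          have e1 : 1 ≤ n - r - i := Nat.le_sub_of_add_le (Nat.add_comm i 1 ▸ hi1)
          have e2 : 1 + (n - r - i - 1) = n - r - i := Nat.add_sub_cancel' e1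
          have e3 : i + (n - r - i) = n - r := Nat.add_sub_cancel' (le_trans (Nat.le_succ i) hi1)
          have e4 : n - r - i - 1 + 1 = n - r - i := Nat.sub_add_cancel e1
          have h3 : i + (1 + (n - r - i - 1)) = n - r := by rw [e2, e3]
          have hprodb : i * b + (b + (n - r - i - 1) * b) = (n - r) * b := by
            calc i * b + (b + (n - r - i - 1) * b) = (i + (1 + (n - r - i - 1))) * b := by ring
            _ = (n - r) * b := by rw [h3]
          have hsplitU : YS = (List.replicate r a ++ List.replicate i b)
              ++ (b :: List.replicate (n - r - i - 1) b) := by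
            rw [hYSdef, show n - r = i + (n - r - i - 1 + 1) from by rw [e4, e3],
              List.replicate_add, List.replicate_succ]
            simp
          have hr1x := hrun (ds ++ f1 :: (gs ++ (c0 :: rest2))) hpi
          rw [hsplitU,
            show ds ++ f1 :: (gs ++ (c0 :: rest2)) = (ds ++ f1 :: gs) ++ (c0 :: rest2)
              by simp] at hr1x
          have h1 := hsimi (c0 :: rest2) _ hr1x
          have hSic0 : z + r * a + i * b < c0 := by omega
          obtain ⟨hfitb, h2⟩ := c0_step hSic0 h1
          have hc0M2 : c0 ≤ M := by omega
          have hmemrest2 : ∀ x ∈ rest2, x ∈ cs := fun x hx => hpi.subset (by simp [hx])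
          have hsum3 : (List.replicate (n - r - i - 1) b).sum = (n - r - i - 1) * b := by
            simp [List.sum_replicate, smul_eq_mul]
          obtain ⟨g, hg, hgS, y', hy', hdisj2⟩ := extract _ rest2
            (Finset.Ico 1 (z + r * a + i * b) ∪ Finset.Ico c0 (c0 + b))
            (z + r * a + i * b)
            (by intro y hy; rw [List.eq_of_mem_replicate hy]; omega)
            (fun x hx => h1cs x (hmemrest2 x hx))
            (by
              intro x hx
              rcases Finset.mem_union.mp hx with h | h <;>
                simp only [Finset.mem_Ico] at h <;> rw [Finset.mem_Icc] <;> omega)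
            (by
              rw [Finset.card_union_of_disjoint (by
                rw [Finset.disjoint_left]
                intro x hx hx2
                simp only [Finset.mem_Ico] at hx hx2
                omega), Nat.card_Ico, Nat.card_Ico, hsum3]
              omega)
            (by omega) (by omega)
            (by
              rw [Finset.mem_union]
              rintro (h | h) <;> simp only [Finset.mem_Ico] at h <;> omega)
            (fun x hx => Finset.mem_union_left _ hx)
            h2
          rw [List.eq_of_mem_replicate hy'] at hdisj2
          have hble : z + r * a + i * b + b ≤ c0 := by
            by_contra hlt
            push_neg at hlt
            exact (hdisj2 c0 (Finset.mem_Ico.mpr ⟨by omega, by omega⟩))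
              (Finset.mem_union_right _ (Finset.mem_Ico.mpr ⟨le_rfl, by omega⟩))
          exact ⟨hble, g, hg, hgS⟩
        -- U phase induction
        have uphase : ∀ i : ℕ, i ≤ j → ∃ gs rest2 : List ℕ,
            (ds ++ f1 :: (gs ++ (c0 :: rest2))).Perm cs ∧ gs.length = i ∧
            (∀ cs' ys' : List ℕ,
              (parkAux M (Finset.Ico 1 z) ((ds ++ f1 :: gs) ++ cs')
                ((List.replicate r a ++ List.replicate i b) ++ ys')).isSome →
              (parkAux M (Finset.Ico 1 (z + r * a + i * b)) cs' ys').isSome) := by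
          intro i
          induction i with
          | zero =>
            intro _
            refine ⟨[], (fs ++ rest).erase f1, hpU0, rfl, ?_⟩
            intro cs' ys' hh
            obtain ⟨hfe3, hfit3⟩ := park_at_S (M := M) (occ := Finset.Ico 1 (z + (r - 1) * a))
              (y := a) h1f1 hf1T (by omega) (by simp) Finset.Subset.rfl
              (by intro i hi; simp only [Finset.mem_Ico] at hi ⊢; omega) (by omega)
            have hh' : (parkAux M (Finset.Ico 1 z) ((ds ++ [f1]) ++ cs')
                ((List.replicate (r - 1) a ++ [a]) ++ ys')).isSome := by
              have e1 : (ds ++ [f1]) ++ cs' = (ds ++ f1 :: ([] : List ℕ)) ++ cs' := by simp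
              have e2 : (List.replicate (r - 1) a ++ [a]) ++ ys'
                  = (List.replicate r a ++ List.replicate 0 b) ++ ys' := by
                rw [← List.replicate_succ', Nat.sub_add_cancel hr1]
                simp
              rw [e1, e2]
              exact hh
            have hnew := sim_extend hsimT hfe3 hfit3 cs' ys' hh'
            have euni : Finset.Ico 1 (z + (r - 1) * a)
                ∪ Finset.Ico (z + (r - 1) * a) (z + (r - 1) * a + a)
                = Finset.Ico 1 (z + r * a + 0 * b) := by
              rw [Finset.Ico_union_Ico_eq_Ico (by omega) (by omega)]
              congr 1
              omega
            rwa [euni] at hnew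
          | succ i ihu =>
            intro hij
            obtain ⟨gs, rest2, hpi, hleni, hsimi⟩ := ihu (by omega)
            obtain ⟨hble, g, hg, hgS⟩ := ustep i (by omega) gs rest2 hpi hleni hsimi
            have h1g : 1 ≤ g := h1cs g (hpi.subset (by simp [hg]))
            have hc0M2 : c0 ≤ M := by omega
            have hsucbi : (i + 1) * b = i * b + b := Nat.succ_mul i b
            obtain ⟨hfe4, hfit4⟩ := park_at_S (M := M) (occ := Finset.Ico 1 (z + r * a + i * b))
              (y := b) h1g hgS (by omega) (by simp) Finset.Subset.rfl
              (by intro x hx; simp only [Finset.mem_Ico] at hx ⊢; omega) (by omega)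
            refine ⟨gs ++ [g], rest2.erase g, ?_, by simp [hleni], ?_⟩
            · have hrp : rest2.Perm (g :: rest2.erase g) := List.perm_cons_erase hg
              have e1 : ds ++ f1 :: ((gs ++ [g]) ++ (c0 :: rest2.erase g))
                  = ds ++ f1 :: (gs ++ (g :: c0 :: rest2.erase g)) := by simp
              rw [e1]
              refine List.Perm.trans ?_ hpi
              exact List.Perm.append_left ds ((List.Perm.append_left gs
                ((List.Perm.swap c0 g _).trans ((hrp.symm).cons c0))).cons f1)
            · intro cs' ys' hh
              have hh' : (parkAux M (Finset.Ico 1 z) (((ds ++ f1 :: gs) ++ [g]) ++ cs')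
                  (((List.replicate r a ++ List.replicate i b) ++ [b]) ++ ys')).isSome := by
                have e1 : ((ds ++ f1 :: gs) ++ [g]) ++ cs'
                    = (ds ++ f1 :: (gs ++ [g])) ++ cs' := by simp
                have e2 : ((List.replicate r a ++ List.replicate i b) ++ [b]) ++ ys'
                    = (List.replicate r a ++ List.replicate (i + 1) b) ++ ys' := by
                  rw [List.replicate_succ']
                  simp
                rw [e1, e2]
                exact hh
              have hnew := sim_extend hsimi hfe4 hfit4 cs' ys' hh'
              have euni : Finset.Ico 1 (z + r * a + i * b)
                  ∪ Finset.Ico (z + r * a + i * b) (z + r * a + i * b + b)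
                  = Finset.Ico 1 (z + r * a + (i + 1) * b) := by
                rw [Finset.Ico_union_Ico_eq_Ico (by omega) (by omega)]
                congr 1
                omega
              rwa [euni] at hnew
        obtain ⟨gs, rest2, hpi, hleni, hsimi⟩ := uphase j le_rfl
        obtain ⟨hble, -⟩ := ustep j le_rfl gs rest2 hpi hleni hsimi
        omega
  obtain ⟨fs, rest, hpN, hlenN, hinvN, hfitMN, -, -⟩ := tphase (n - r) le_rfl
  omega
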